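/- There is a bijection Θ from the set [1_n] of connected non-crossing linked partitions of {1,…,n} onto the set 𝔗(n) of planar rooted trees with n vertices, under which blocks of the linked partition correspond to the elementary subtrees (a root together with its offsprings) of the tree. -/

import Mathlib

open Finset

/-- Two blocks cross if there are i < k < p < q with i,p in one and k,q in the other. -/
def Crossing {α : Type*} [LinearOrder α] (B D : Finset α) : Prop :=
  ∃ i ∈ B, ∃ p ∈ B, ∃ k ∈ D, ∃ q ∈ D, i < k ∧ k < p ∧ p < q

/-- A family of blocks is non-crossing. -/
def IsNonCrossing {α : Type*} [LinearOrder α] (P : Finset (Finset α)) : Prop :=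
  ∀ B ∈ P, ∀ D ∈ P, B ≠ D → ¬ Crossing B D

/-- Non-crossing partitions of {1, ..., n}, modelled on `Fin n`. -/
def NC (n : ℕ) : Set (Finset (Finset (Fin n))) :=
  {P | (∀ B ∈ P, B.Nonempty) ∧ (∀ a : Fin n, ∃! B, B ∈ P ∧ a ∈ B) ∧ IsNonCrossing P}

/-- Reversed refinement order: every block of `π` is contained in a block of `σ`. -/
def ncle {n : ℕ} (π σ : Finset (Finset (Fin n))) : Prop :=
  ∀ B ∈ π, ∃ D ∈ σ, B ⊆ D

/-- the position of `i` (an element "i") in the interlaced set 1 < 1̄ < 2 < 2̄ < ... -/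
def oddE (n : ℕ) (i : Fin n) : Fin (2 * n) := ⟨2 * i.1, by have := i.2; omega⟩

/-- the position of `ī` (a "barred" element) in the interlaced set. -/
def evenE (n : ℕ) (i : Fin n) : Fin (2 * n) := ⟨2 * i.1 + 1, by have := i.2; omega⟩

/-- `γ ∪ σ` viewed on the interlaced set 1 < 1̄ < 2 < 2̄ < ... < n < n̄. -/
def interlace {n : ℕ} (γ σ : Finset (Finset (Fin n))) : Finset (Finset (Fin (2 * n))) :=
  γ.image (fun B => B.image (oddE n)) ∪ σ.image (fun B => B.image (evenE n))

/-- `σ` is the Kreweras complement of `γ`: the largest non-crossing partition of the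
barred copies such that `γ ∪ σ` is non-crossing on the interlaced set. -/
def IsKreweras {n : ℕ} (γ σ : Finset (Finset (Fin n))) : Prop :=
  σ ∈ NC n ∧ IsNonCrossing (interlace γ σ) ∧
    ∀ τ ∈ NC n, IsNonCrossing (interlace γ τ) → ncle τ σ

/-- Non-crossing linked partitions of {1,…,n}: blocks are nonempty, cover everything, are
mutually non-crossing, any two blocks meet in at most one element, and a common element
forces both blocks to have ≥ 2 elements and to be minimal in exactly one of them. -/
def NCL (n : ℕ) : Set (Finset (Finset (Fin n))) :=
  {P | (∀ B ∈ P, B.Nonempty) ∧ (∀ a : Fin n, ∃ B ∈ P, a ∈ B) ∧ IsNonCrossing P ∧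
    ∀ B ∈ P, ∀ D ∈ P, B ≠ D → (B ∩ D).card ≤ 1 ∧
      ∀ j ∈ B ∩ D, 2 ≤ B.card ∧ 2 ≤ D.card ∧ ((∀ b ∈ B, j ≤ b) ↔ ¬ ∀ b ∈ D, j ≤ b)}

/-- A block `B` of a non-crossing linked partition `π` is exterior if no other block `D`
contains elements `l, s` with `l ≤ min B` and `max B < s`. -/
def IsExtL {n : ℕ} (π : Finset (Finset (Fin n))) (B : Finset (Fin n)) : Prop :=
  ¬ ∃ D ∈ π, D ≠ B ∧ ∃ l ∈ D, ∃ s ∈ D, ∀ b ∈ B, l ≤ b ∧ b < s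

/-- `i` and `j` are connected in `π`: joined by a chain of pairwise intersecting blocks. -/
def Connected {n : ℕ} (π : Finset (Finset (Fin n))) (i j : Fin n) : Prop :=
  Relation.ReflTransGen (fun a b => ∃ B ∈ π, a ∈ B ∧ b ∈ B) i j

/-- `γ` is the non-crossing partition `c(π)` of connected components of `π`: `i, j` lie in
a common block of `γ` iff they are connected in `π`. -/
def cIs {n : ℕ} (π γ : Finset (Finset (Fin n))) : Prop :=
  ∀ i j : Fin n, (∃ B ∈ γ, i ∈ B ∧ j ∈ B) ↔ Connected π i j

/-- The order on `NCL(n)`: `π ⪰ σ` iff every block of `π` is a union of blocks of `σ`. -/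
def nclge {n : ℕ} (π σ : Finset (Finset (Fin n))) : Prop :=
  ∀ B ∈ π, ∃ S ⊆ σ, B = S.sup id

/-- The offsprings of the vertex `v` in the tree given by the parent function `p`. -/
def offspring {n : ℕ} (p : Fin n → Fin n) (v : Fin n) : Finset (Fin n) :=
  Finset.univ.filter (fun j => p j = v ∧ j ≠ v)

/-- `p` is the parent function of a planar rooted tree on `Fin n`, rooted at `0`, whose
labels are the left depth-first order (children being ordered by their labels): the
parent of each non-root vertex `i` lies on the rightmost path of the tree on `{0,…,i-1}`,
i.e. is an iterated parent of `i - 1`. -/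
def IsDFSTree {n : ℕ} (p : Fin n → Fin n) : Prop :=
  (∀ i : Fin n, i.1 = 0 → p i = i) ∧
  (∀ i : Fin n, 0 < i.1 → p i < i) ∧
  (∀ i : Fin n, 0 < i.1 → ∃ m : ℕ,
    p i = p^[m] ⟨i.1 - 1, lt_of_le_of_lt (Nat.sub_le _ _) i.2⟩)

/-! ### Auxiliary development -/

section Aux

variable {n : ℕ}

/-- Ancestor relation of a parent function. -/
def Anc (p : Fin n → Fin n) (v w : Fin n) : Prop := ∃ k : ℕ, p^[k] w = v

/-- The set of blocks (elementary subtrees) associated to a parent function. -/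
def phiFun (n : ℕ) (p : Fin n → Fin n) : Finset (Finset (Fin n)) :=
  (Finset.univ.filter fun v => (offspring p v).Nonempty ∨ n = 1).image
    fun v => insert v (offspring p v)

section Tree

variable {p : Fin n → Fin n} (hp : IsDFSTree p)
include hp

lemma dfs_p_le (i : Fin n) : p i ≤ i := by
  rcases Nat.eq_zero_or_pos i.1 with h | h
  · exact le_of_eq (hp.1 i h)
  · exact le_of_lt (hp.2.1 i h)

omit hp in
lemma anc_refl (v : Fin n) : Anc p v v := ⟨0, rfl⟩

omit hp in
lemma anc_trans {u v w : Fin n} (h1 : Anc p u v) (h2 : Anc p v w) : Anc p u w := by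
  obtain ⟨k, hk⟩ := h1; obtain ⟨l, hl⟩ := h2
  exact ⟨k + l, by rw [Function.iterate_add_apply, hl, hk]⟩

lemma anc_le {v w : Fin n} (h : Anc p v w) : v ≤ w := by
  obtain ⟨k, hk⟩ := h
  subst hk
  induction k with
  | zero => exact le_refl _
  | succ k ih => calc p^[k+1] w = p (p^[k] w) := Function.iterate_succ_apply' p k w
                 _ ≤ p^[k] w := dfs_p_le hp _
                 _ ≤ w := ih

omit hp in
lemma anc_step {v w : Fin n} (h : Anc p v w) (hne : v ≠ w) : Anc p v (p w) := by
  obtain ⟨k, hk⟩ := h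
  cases k with
  | zero => exact absurd hk.symm hne
  | succ k => exact ⟨k, by rw [← Function.iterate_succ_apply p k w]; exact hk⟩

lemma anc_parent {v w : Fin n} (h : Anc p v w) (hvw : v ≠ w) (hw : 0 < w.1) :
    Anc p v ⟨w.1 - 1, lt_of_le_of_lt (Nat.sub_le _ _) w.2⟩ := by
  obtain ⟨m, hm⟩ := hp.2.2 w hw
  have h1 : Anc p v (p w) := anc_step h hvw
  exact anc_trans h1 ⟨m, hm.symm⟩

/-- Interval property: an ancestor of `w` is an ancestor of every `u` with `v ≤ u ≤ w`. -/
lemma anc_interval : ∀ N : ℕ, ∀ w : Fin n, w.1 = N → ∀ {v u : Fin n},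
    Anc p v w → v ≤ u → u ≤ w → Anc p v u := by
  intro N
  induction N using Nat.strong_induction_on with
  | _ N ih =>
    intro w hwN v u hvw hvu huw
    rcases eq_or_lt_of_le huw with h | h
    · exact h ▸ hvw
    · have hvltw : v < w := lt_of_le_of_lt hvu h
      have hw : 0 < w.1 := lt_of_le_of_lt (Nat.zero_le _) hvltw
      set w' : Fin n := ⟨w.1 - 1, lt_of_le_of_lt (Nat.sub_le _ _) w.2⟩ with hw'
      have h1 : Anc p v w' := anc_parent hp hvw (ne_of_lt hvltw) hw
      have huw' : u ≤ w' := by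
        rw [Fin.le_def]; rw [Fin.lt_def] at h; simp only [hw']; omega
      exact ih w'.1 (by simp [hw']; omega) w' rfl h1 hvu huw'

omit hp in
lemma mem_block_iff {v x : Fin n} :
    x ∈ insert v (offspring p v) ↔ x = v ∨ (p x = v ∧ x ≠ v) := by
  simp [offspring, Finset.mem_insert, Finset.mem_filter]

lemma offspring_gt {v j : Fin n} (hj : j ∈ offspring p v) : v < j := by
  rw [offspring, Finset.mem_filter] at hj
  obtain ⟨-, h1, h2⟩ := hj
  rcases Nat.eq_zero_or_pos j.1 with h | h
  · exact absurd ((hp.1 j h).symm.trans h1) h2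
  · exact h1 ▸ hp.2.1 j h

lemma block_le {v x : Fin n} (hx : x ∈ insert v (offspring p v)) : v ≤ x := by
  rcases Finset.mem_insert.1 hx with h | h
  · exact le_of_eq h.symm
  · exact le_of_lt (offspring_gt hp h)

omit hp in
lemma block_anc {v x : Fin n} (hx : x ∈ insert v (offspring p v)) : Anc p v x := by
  rcases mem_block_iff.1 hx with h | h
  · exact h ▸ anc_refl (p := p) v
  · exact ⟨1, by simpa using h.1⟩

/-- Core non-crossing argument for the blocks of a DFS tree. -/
lemma dfs_noncross {v w a b k q : Fin n} (hvw : v ≠ w)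
    (ha : a ∈ insert v (offspring p v)) (hb : b ∈ insert v (offspring p v))
    (hk : k ∈ insert w (offspring p w)) (hq : q ∈ insert w (offspring p w))
    (h1 : a < k) (h2 : k < b) (h3 : b < q) : False := by
  have hva : v ≤ a := block_le hp ha
  have hwk : w ≤ k := block_le hp hk
  have hvb : Anc p v b := block_anc hb
  have hvk : Anc p v k := anc_interval hp b.1 b rfl hvb (le_trans hva (le_of_lt h1)) (le_of_lt h2)
  -- establish `Anc p v w`
  have hvltk : v < k := lt_of_le_of_lt hva h1
  have hwltq : w < q := lt_of_le_of_lt hwk (lt_trans h2 h3)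
  have hvw' : Anc p v w := by
    rcases mem_block_iff.1 hk with hkw | hkw
    · exact hkw ▸ hvk
    · have h' : Anc p v (p k) := anc_step hvk (ne_of_lt hvltk)
      exact hkw.1 ▸ h'
  -- q is a child of w
  have hqw : p q = w := by
    rcases mem_block_iff.1 hq with h | h
    · exact absurd (h ▸ hwltq) (lt_irrefl w)
    · exact h.1
  have hvq : Anc p v q := anc_trans hvw' ⟨1, by simpa using hqw⟩
  have hvq' : v ≠ q := ne_of_lt (lt_of_le_of_lt hva (lt_trans h1 (lt_trans h2 h3)))
  -- minimal chain from q to v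
  have hex : ∃ k₀ : ℕ, p^[k₀] q = v := hvq
  classical
  set k₀ := Nat.find hex with hk₀def
  have hk₀spec : p^[k₀] q = v := Nat.find_spec hex
  have hk₀pos : k₀ ≠ 0 := by
    intro h; rw [h] at hk₀spec; exact hvq' hk₀spec.symm
  have hk₀two : 2 ≤ k₀ := by
    rcases Nat.lt_or_ge k₀ 2 with h | h
    · interval_cases k₀
      · exact absurd rfl hk₀pos
      · simp at hk₀spec; exact (hvw (hk₀spec.symm.trans hqw)).elim
    · exact h
  set c : Fin n := p^[k₀ - 1] q with hc
  have hpc : p c = v := by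
    rw [hc, ← Function.iterate_succ_apply' p (k₀ - 1) q]
    rw [Nat.succ_eq_add_one, Nat.sub_add_cancel (by omega)]
    exact hk₀spec
  have hcv : c ≠ v := by
    intro h
    exact Nat.find_min hex (by omega : k₀ - 1 < k₀) (h ▸ hc ▸ rfl)
  have hcw : Anc p c w := by
    refine ⟨k₀ - 2, ?_⟩
    rw [← hqw, ← Function.iterate_succ_apply p (k₀ - 2) q]
    rw [hc]; congr 1; omega
  have hclew : c ≤ w := anc_le hp hcw
  have hcq : Anc p c q := ⟨k₀ - 1, rfl⟩
  have hcb : Anc p c b :=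
    anc_interval hp q.1 q rfl hcq (le_trans hclew (le_of_lt (lt_of_le_of_lt hwk h2))) (le_of_lt h3)
  have hcbne : c ≠ b := ne_of_lt (lt_of_le_of_lt hclew (lt_of_le_of_lt hwk h2))
  have hbv : p b = v := by
    rcases mem_block_iff.1 hb with h | h
    · subst h; exact absurd (lt_of_le_of_lt hva (lt_trans h1 h2)) (lt_irrefl b)
    · exact h.1
  have hcv2 : Anc p c v := hbv ▸ anc_step hcb hcbne
  have : c = v := le_antisymm (anc_le hp hcv2) (hpc ▸ dfs_p_le hp c)
  exact hcv this

end Tree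

section Tree2

variable {p : Fin n → Fin n} (hp : IsDFSTree p)

omit hp in
lemma mem_phiFun {B : Finset (Fin n)} :
    B ∈ phiFun n p ↔ ∃ v : Fin n, ((offspring p v).Nonempty ∨ n = 1) ∧
      B = insert v (offspring p v) := by
  simp only [phiFun, Finset.mem_image, Finset.mem_filter, Finset.mem_univ, true_and]
  constructor
  · rintro ⟨v, hv, rfl⟩; exact ⟨v, hv, rfl⟩
  · rintro ⟨v, hv, rfl⟩; exact ⟨v, hv, rfl⟩

include hp

lemma block_min {v : Fin n} (h : (insert v (offspring p v)).Nonempty) :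
    (insert v (offspring p v)).min' h = v := by
  apply le_antisymm
  · exact Finset.min'_le _ _ (Finset.mem_insert_self _ _)
  · exact block_le hp (Finset.min'_mem _ _)

/-- The intersection pattern of two distinct blocks. -/
lemma block_inter {v w x : Fin n} (hvw : v ≠ w)
    (hx : x ∈ insert v (offspring p v)) (hx' : x ∈ insert w (offspring p w)) :
    (x = v ∧ p v = w) ∨ (x = w ∧ p w = v) := by
  rcases mem_block_iff.1 hx with h1 | h1 <;> rcases mem_block_iff.1 hx' with h2 | h2
  · exact absurd (h1.symm.trans h2) hvw
  · exact Or.inl ⟨h1, h1 ▸ h2.1⟩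
  · exact Or.inr ⟨h2, h2 ▸ h1.1⟩
  · exact absurd (h1.1.symm.trans h2.1) hvw

lemma parent_lt {v w : Fin n} (h : p v = w) (hne : v ≠ w) : w < v := by
  rcases Nat.eq_zero_or_pos v.1 with h0 | h0
  · exact absurd ((hp.1 v h0).symm.trans h) hne
  · exact h ▸ hp.2.1 v h0

lemma conn_zero (hn : 1 ≤ n) : ∀ N : ℕ, ∀ i : Fin n, i.1 = N →
    Connected (phiFun n p) i ⟨0, hn⟩ := by
  intro N
  induction N using Nat.strong_induction_on with
  | _ N ih =>
    intro i hiN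
    rcases Nat.eq_zero_or_pos i.1 with h0 | h0
    · have : i = ⟨0, hn⟩ := Fin.ext h0
      exact this ▸ Relation.ReflTransGen.refl
    · have hplt : p i < i := hp.2.1 i h0
      have hio : i ∈ offspring p (p i) :=
        Finset.mem_filter.2 ⟨Finset.mem_univ i, rfl, ne_of_gt hplt⟩
      have hB : insert (p i) (offspring p (p i)) ∈ phiFun n p :=
        mem_phiFun.2 ⟨p i, Or.inl ⟨i, hio⟩, rfl⟩
      refine Relation.ReflTransGen.head ⟨_, hB, Finset.mem_insert_of_mem hio,
        Finset.mem_insert_self _ _⟩ ?_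
      exact ih (p i).1 (hiN ▸ hplt) (p i) rfl

lemma conn_all (hn : 1 ≤ n) (i j : Fin n) : Connected (phiFun n p) i j := by
  have hsym : Symmetric (fun a b : Fin n => ∃ B ∈ phiFun n p, a ∈ B ∧ b ∈ B) := by
    rintro a b ⟨B, hB, h1, h2⟩; exact ⟨B, hB, h2, h1⟩
  exact Relation.ReflTransGen.trans (conn_zero hp hn i.1 i rfl)
    (@Std.Symm.symm _ _ (@Relation.ReflTransGen.stdSymm _ _ ⟨fun a b h => hsym h⟩) _ _ (conn_zero hp hn j.1 j rfl))

lemma phiFun_mem_NCL (hn : 1 ≤ n) :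
    phiFun n p ∈ NCL n ∧ cIs (phiFun n p) {(Finset.univ : Finset (Fin n))} := by
  have hmin : ∀ v : Fin n, ∀ B, B = insert v (offspring p v) → ∀ x ∈ B, v ≤ x := by
    rintro v B rfl x hx; exact block_le hp hx
  constructor
  · refine ⟨?_, ?_, ?_, ?_⟩
    · -- nonempty
      rintro B hB
      obtain ⟨v, -, rfl⟩ := mem_phiFun.1 hB
      exact Finset.insert_nonempty _ _
    · -- cover
      intro a
      by_cases ha : (offspring p a).Nonempty ∨ n = 1
      · exact ⟨_, mem_phiFun.2 ⟨a, ha, rfl⟩, Finset.mem_insert_self _ _⟩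
      · push_neg at ha
        have ha1 : 0 < a.1 := by
          rcases Nat.eq_zero_or_pos a.1 with h0 | h0
          · exfalso
            have h2n : 2 ≤ n := by
              rcases Nat.lt_or_ge n 2 with h | h
              · exfalso; exact ha.2 (by omega)
              · exact h
            have hlt : p ⟨1, by omega⟩ < (⟨1, by omega⟩ : Fin n) := hp.2.1 _ (by simp)
            have hlt' : (p (⟨1, by omega⟩ : Fin n)).1 < 1 := hlt
            have h1 : (⟨1, by omega⟩ : Fin n) ∈ offspring p a := by
              refine Finset.mem_filter.2 ⟨Finset.mem_univ _, Fin.ext (by omega), ?_⟩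
              intro hcon
              rw [← hcon] at h0; simp at h0
            exact (Finset.nonempty_iff_ne_empty.1 ⟨_, h1⟩) ha.1
          · exact h0
        have hao : a ∈ offspring p (p a) :=
          Finset.mem_filter.2 ⟨Finset.mem_univ a, rfl, ne_of_gt (hp.2.1 a ha1)⟩
        exact ⟨_, mem_phiFun.2 ⟨p a, Or.inl ⟨a, hao⟩, rfl⟩, Finset.mem_insert_of_mem hao⟩
    · -- non-crossing
      rintro B hB D hD hBD ⟨a, ha, b, hb, k, hk, q, hq, h1, h2, h3⟩
      obtain ⟨v, -, rfl⟩ := mem_phiFun.1 hB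
      obtain ⟨w, -, rfl⟩ := mem_phiFun.1 hD
      have hvw : v ≠ w := fun h => hBD (by rw [h])
      exact dfs_noncross hp hvw ha hb hk hq h1 h2 h3
    · -- linking conditions
      rintro B hB D hD hBD
      obtain ⟨v, hvcond, rfl⟩ := mem_phiFun.1 hB
      obtain ⟨w, hwcond, rfl⟩ := mem_phiFun.1 hD
      have hvw : v ≠ w := fun h => hBD (by rw [h])
      constructor
      · -- card of intersection
        rw [Finset.card_le_one]
        intro x hx y hy
        rw [Finset.mem_inter] at hx hy
        have hcontra : ¬ (p v = w ∧ p w = v) := by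
          rintro ⟨h1', h2'⟩
          exact absurd (lt_trans (parent_lt hp h1' hvw) (parent_lt hp h2' hvw.symm))
            (lt_irrefl w)
        rcases block_inter hp hvw hx.1 hx.2 with ⟨hxv, hx2⟩ | ⟨hxw, hx2⟩ <;>
          rcases block_inter hp hvw hy.1 hy.2 with ⟨hyv, hy2⟩ | ⟨hyw, hy2⟩
        · exact hxv.trans hyv.symm
        · exact absurd ⟨hx2, hy2⟩ hcontra
        · exact absurd ⟨hy2, hx2⟩ hcontra
        · exact hxw.trans hyw.symm
      · intro j hj
        rw [Finset.mem_inter] at hj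
        have hn1 : n ≠ 1 := by
          intro h
          subst h
          exact hvw (Subsingleton.elim v w)
        have hvne : (offspring p v).Nonempty := hvcond.resolve_right hn1
        have hwne : (offspring p w).Nonempty := hwcond.resolve_right hn1
        have hcv : 2 ≤ (insert v (offspring p v)).card := by
          obtain ⟨x, hx⟩ := hvne
          have : x ≠ v := ne_of_gt (offspring_gt hp hx)
          calc 2 = ({x, v} : Finset (Fin n)).card := by
                rw [Finset.card_insert_of_notMem (by simpa using this), Finset.card_singleton]
            _ ≤ _ := Finset.card_le_card (by
                intro y hy
                rcases Finset.mem_insert.1 hy with rfl | hy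
                · exact Finset.mem_insert_of_mem hx
                · rw [Finset.mem_singleton] at hy; exact hy ▸ Finset.mem_insert_self _ _)
        have hcw : 2 ≤ (insert w (offspring p w)).card := by
          obtain ⟨x, hx⟩ := hwne
          have : x ≠ w := ne_of_gt (offspring_gt hp hx)
          calc 2 = ({x, w} : Finset (Fin n)).card := by
                rw [Finset.card_insert_of_notMem (by simpa using this), Finset.card_singleton]
            _ ≤ _ := Finset.card_le_card (by
                intro y hy
                rcases Finset.mem_insert.1 hy with rfl | hy
                · exact Finset.mem_insert_of_mem hx
                · rw [Finset.mem_singleton] at hy; exact hy ▸ Finset.mem_insert_self _ _)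
        refine ⟨hcv, hcw, ?_⟩
        rcases block_inter hp hvw hj.1 hj.2 with ⟨hjv, hj2⟩ | ⟨hjw, hj2⟩
        · -- j = v, p v = w : j is min of B, not min of D
          have hwv : w < v := parent_lt hp hj2 hvw
          refine iff_of_true (fun b hb => le_of_eq hjv |>.trans (block_le hp hb)) ?_
          intro hall
          exact absurd (hall w (Finset.mem_insert_self _ _))
            (not_le_of_gt (lt_of_lt_of_le hwv (le_of_eq hjv.symm)))
        · -- j = w, p w = v : j is min of D, not min of B
          have hvw' : v < w := parent_lt hp hj2 hvw.symm
          refine iff_of_false ?_ (not_not_intro (fun b hb => le_of_eq hjw |>.trans (block_le hp hb)))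
          intro hall
          exact absurd (hall v (Finset.mem_insert_self _ _))
            (not_le_of_gt (lt_of_lt_of_le hvw' (le_of_eq hjw.symm)))
  · intro i j
    constructor
    · intro _; exact conn_all hp hn i j
    · intro _
      exact ⟨Finset.univ, Finset.mem_singleton_self _, Finset.mem_univ _, Finset.mem_univ _⟩

end Tree2



/-- Reachability in `m` steps from vertex `0`. -/
def reachP {n : ℕ} (π : Finset (Finset (Fin n))) : ℕ → Fin n → Prop
  | 0, y => y.1 = 0
  | (m+1), y => reachP π m y ∨ ∃ x, reachP π m x ∧ ∃ B ∈ π, x ∈ B ∧ y ∈ B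

/-- The parent function constructed from a linked partition: the minimum of the union of
all blocks containing `x`. -/
noncomputable def pConstr (n : ℕ) (π : Finset (Finset (Fin n))) : Fin n → Fin n :=
  fun x => if h : ((π.filter fun C => x ∈ C).biUnion id).Nonempty
    then ((π.filter fun C => x ∈ C).biUnion id).min' h else x

section Partition

variable {π : Finset (Finset (Fin n))} (hπ : π ∈ NCL n)
  (hc : cIs π {(Finset.univ : Finset (Fin n))}) (hn : 1 ≤ n)

include hπ

lemma uniq_nonmin {B D : Finset (Fin n)} {x b d : Fin n} (hB : B ∈ π) (hD : D ∈ π)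
    (hxB : x ∈ B) (hxD : x ∈ D) (hb : b ∈ B) (hbx : b < x) (hd : d ∈ D) (hdx : d < x) :
    B = D := by
  by_contra hBD
  obtain ⟨-, -, hiff⟩ := (hπ.2.2.2 B hB D hD hBD).2 x (Finset.mem_inter.2 ⟨hxB, hxD⟩)
  have h1 : ¬ ∀ b' ∈ B, x ≤ b' := fun h => absurd (h b hb) (not_le_of_gt hbx)
  have h2 : ¬ ∀ d' ∈ D, x ≤ d' := fun h => absurd (h d hd) (not_le_of_gt hdx)
  exact h1 (hiff.mpr h2)

lemma mem_unionblocks (x : Fin n) : x ∈ (π.filter fun C => x ∈ C).biUnion id := by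
  obtain ⟨B, hB, hxB⟩ := hπ.2.1 x
  exact Finset.mem_biUnion.2 ⟨B, Finset.mem_filter.2 ⟨hB, hxB⟩, hxB⟩

lemma pC_le (x : Fin n) : pConstr n π x ≤ x := by
  rw [pConstr, dif_pos ⟨x, mem_unionblocks hπ x⟩]
  exact Finset.min'_le _ _ (mem_unionblocks hπ x)

lemma pC_zero {x : Fin n} (hx : x.1 = 0) : pConstr n π x = x := by
  apply le_antisymm (pC_le hπ x)
  rw [Fin.le_def]; omega

lemma pC_eq_min {B : Finset (Fin n)} {x b : Fin n} (hB : B ∈ π) (hx : x ∈ B)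
    (hb : b ∈ B) (hbx : b < x) :
    pConstr n π x = B.min' ⟨b, hb⟩ := by
  have hne : ((π.filter fun C => x ∈ C).biUnion id).Nonempty := ⟨x, mem_unionblocks hπ x⟩
  rw [pConstr, dif_pos hne]
  have hmem := Finset.min'_mem _ hne
  rw [Finset.mem_biUnion] at hmem
  obtain ⟨C, hC, heC⟩ := hmem
  rw [Finset.mem_filter] at hC
  simp only [id] at heC
  have hble : ((π.filter fun C => x ∈ C).biUnion id).min' hne ≤ b :=
    Finset.min'_le _ _ (Finset.mem_biUnion.2 ⟨B, Finset.mem_filter.2 ⟨hB, hx⟩, hb⟩)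
  have hCB : C = B := by
    rcases eq_or_ne C B with h | h
    · exact h
    · exact absurd (uniq_nonmin hπ hC.1 hB hC.2 hx heC (lt_of_le_of_lt hble hbx) hb hbx) h
  subst hCB
  apply le_antisymm
  · exact Finset.min'_le _ _ (Finset.mem_biUnion.2 ⟨C, Finset.mem_filter.2 ⟨hB, hx⟩,
      Finset.min'_mem _ _⟩)
  · exact Finset.min'_le _ _ heC

include hc hn

omit hπ in
lemma conn_from_zero (y : Fin n) : Connected π ⟨0, hn⟩ y :=
  (hc ⟨0, hn⟩ y).1 ⟨Finset.univ, Finset.mem_singleton_self _, Finset.mem_univ _,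
    Finset.mem_univ _⟩

/-- Every non-zero element fails to be the minimum of some block containing it. -/
lemma exists_nonmin {x : Fin n} (hx : 0 < x.1) : ∃ B ∈ π, x ∈ B ∧ ∃ b ∈ B, b < x := by
  classical
  set z0 : Fin n := ⟨0, hn⟩ with hz0
  have hreach : ∀ y, ∃ m, reachP π m y := by
    intro y
    have h := conn_from_zero hc hn y
    induction h with
    | refl => exact ⟨0, rfl⟩
    | tail hab hbc ih =>
      obtain ⟨m, hm⟩ := ih
      exact ⟨m + 1, Or.inr ⟨_, hm, hbc⟩⟩
  set d : Fin n → ℕ := fun y => Nat.find (hreach y) with hd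
  have hd1 : ∀ y, reachP π (d y) y := fun y => Nat.find_spec (hreach y)
  have hd2 : ∀ y m, reachP π m y → d y ≤ m := fun y m h => Nat.find_min' (hreach y) h
  have hd3 : ∀ y m, m < d y → ¬ reachP π m y := fun y m h => Nat.find_min (hreach y) h
  -- the element of minimal depth in each block
  set zB : Finset (Fin n) → Fin n := fun B =>
    if h : B.Nonempty then (Finset.exists_min_image B d h).choose else z0 with hzBdef
  have hzspec : ∀ B ∈ π, zB B ∈ B ∧ ∀ b ∈ B, d (zB B) ≤ d b := by
    intro B hB
    have hne : B.Nonempty := hπ.1 B hB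
    have hch := (Finset.exists_min_image B d hne).choose_spec
    simp only [hzBdef, dif_pos hne]
    exact ⟨hch.1, hch.2⟩
  set NM : Finset (Fin n) → Finset (Fin n) := fun B => B.filter (fun y => ∃ b ∈ B, b < y)
    with hNMdef
  have hNMerase : ∀ B ∈ π, ∀ h : B.Nonempty, NM B = B.erase (B.min' h) := by
    intro B hB h
    ext y
    simp only [hNMdef, Finset.mem_filter, Finset.mem_erase]
    constructor
    · rintro ⟨hyB, b, hb, hby⟩
      exact ⟨fun hcon => absurd (lt_of_le_of_lt (hcon ▸ Finset.min'_le _ _ hb) hby)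
        (lt_irrefl y), hyB⟩
    · rintro ⟨hyne, hyB⟩
      exact ⟨hyB, B.min' h, Finset.min'_mem _ _,
        lt_of_le_of_ne (Finset.min'_le _ _ hyB) (Ne.symm hyne)⟩
  have hNMcard : ∀ B ∈ π, (NM B).card = B.card - 1 := by
    intro B hB
    rw [hNMerase B hB (hπ.1 B hB), Finset.card_erase_of_mem (Finset.min'_mem _ _)]
  have hWcard : (π.biUnion NM).card = ∑ B ∈ π, (B.card - 1) := by
    rw [Finset.card_biUnion]
    · exact Finset.sum_congr rfl hNMcard
    · intro B hB D hD hBD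
      rw [Function.onFun, Finset.disjoint_left]
      intro a haB haD
      simp only [hNMdef, Finset.mem_filter] at haB haD
      obtain ⟨haB1, b, hb, hba⟩ := haB
      obtain ⟨haD1, e, he, hea⟩ := haD
      exact hBD (uniq_nonmin hπ hB hD haB1 haD1 hb hba he hea)
  have hWsub : π.biUnion NM ⊆ Finset.univ.erase z0 := by
    intro y hy
    rw [Finset.mem_biUnion] at hy
    obtain ⟨B, hB, hyB⟩ := hy
    simp only [hNMdef, Finset.mem_filter] at hyB
    obtain ⟨-, b, -, hby⟩ := hyB
    refine Finset.mem_erase.2 ⟨?_, Finset.mem_univ _⟩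
    intro hcon
    rw [hcon, hz0, Fin.lt_def] at hby
    simp at hby
  have hW'sub : Finset.univ.erase z0 ⊆ π.biUnion (fun B => B.erase (zB B)) := by
    intro y hy
    have hyne : y ≠ z0 := (Finset.mem_erase.1 hy).1
    have hdy : d y ≠ 0 := by
      intro hcon
      have := hd1 y
      rw [hcon] at this
      exact hyne (Fin.ext this)
    obtain ⟨m, hm⟩ : ∃ m, d y = m + 1 := ⟨d y - 1, by omega⟩
    have hry := hd1 y
    rw [hm] at hry
    rcases hry with hry | ⟨x', hx', B, hB, hx'B, hyB⟩
    · exact absurd hry (hd3 y m (by omega))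
    · have hdx' : d x' ≤ m := hd2 x' m hx'
      have hdz : d (zB B) ≤ m := le_trans ((hzspec B hB).2 x' hx'B) hdx'
      have hzy : zB B ≠ y := by
        intro hcon
        rw [hcon] at hdz
        omega
      exact Finset.mem_biUnion.2 ⟨B, hB, Finset.mem_erase.2 ⟨(Ne.symm hzy), hyB⟩⟩
  have hW'card : (π.biUnion (fun B => B.erase (zB B))).card ≤ ∑ B ∈ π, (B.card - 1) := by
    refine le_trans Finset.card_biUnion_le (le_of_eq (Finset.sum_congr rfl ?_))
    intro B hB
    rw [Finset.card_erase_of_mem ((hzspec B hB).1)]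
  have hchain : (Finset.univ.erase z0).card ≤ (π.biUnion NM).card := by
    calc (Finset.univ.erase z0).card ≤ (π.biUnion (fun B => B.erase (zB B))).card :=
          Finset.card_le_card hW'sub
      _ ≤ ∑ B ∈ π, (B.card - 1) := hW'card
      _ = (π.biUnion NM).card := hWcard.symm
  have hWeq : π.biUnion NM = Finset.univ.erase z0 :=
    Finset.eq_of_subset_of_card_le hWsub hchain
  have hxW : x ∈ π.biUnion NM := by
    rw [hWeq]
    refine Finset.mem_erase.2 ⟨?_, Finset.mem_univ _⟩
    intro hcon
    rw [hcon] at hx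
    simp [hz0] at hx
  rw [Finset.mem_biUnion] at hxW
  obtain ⟨B, hB, hxB⟩ := hxW
  simp only [hNMdef, Finset.mem_filter] at hxB
  exact ⟨B, hB, hxB.1, hxB.2⟩

end Partition

section Partition2

variable {π : Finset (Finset (Fin n))} (hπ : π ∈ NCL n)
  (hc : cIs π {(Finset.univ : Finset (Fin n))}) (hn : 1 ≤ n)

include hπ hc hn

/-- Claim E: the minimum of a block is an iterated parent of every `j` strictly between
it and any element of the block. -/
lemma claimE : ∀ N : ℕ, ∀ j : Fin n, j.1 = N →
    ∀ B (hB : B ∈ π) (hne : B.Nonempty), ∀ i ∈ B, B.min' hne ≤ j → j < i →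
      ∃ m, (pConstr n π)^[m] j = B.min' hne := by
  intro N
  induction N using Nat.strong_induction_on with
  | _ N ih =>
    intro j hjN B hB hne i hi hvj hji
    rcases eq_or_lt_of_le hvj with h | h
    · exact ⟨0, h.symm⟩
    · -- j is not the minimum: it has positive index
      have hj0 : 0 < j.1 := lt_of_le_of_lt (Nat.zero_le _) h
      obtain ⟨D, hD, hjD, b, hb, hbj⟩ := exists_nonmin hπ hc hn hj0
      have hwD : D.Nonempty := ⟨b, hb⟩
      set w := D.min' hwD with hwdef
      have hpj : pConstr n π j = w := pC_eq_min hπ hD hjD hb hbj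
      have hwj : w < j := lt_of_le_of_lt (Finset.min'_le _ _ hb) hbj
      rcases le_or_gt (B.min' hne) w with hvw | hvw
      · -- recurse at w
        obtain ⟨m, hm⟩ := ih w.1 (by rw [Fin.lt_def] at hwj; omega) w rfl B hB hne i hi hvw
          (lt_trans hwj hji)
        exact ⟨m + 1, by rw [Function.iterate_succ_apply, hpj, hm]⟩
      · -- crossing contradiction
        exfalso
        have hDB : D ≠ B := by
          intro hcon
          have hwB : w ∈ B := by
            rw [← hcon, hwdef]
            exact Finset.min'_mem D hwD
          exact absurd hvw (not_lt_of_ge (Finset.min'_le B w hwB))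
        exact hπ.2.2.1 D hD B hB hDB ⟨w, hwdef ▸ Finset.min'_mem D hwD, j, hjD,
          B.min' hne, Finset.min'_mem _ _, i, hi, hvw, h, hji⟩

lemma pC_dfs : IsDFSTree (pConstr n π) := by
  refine ⟨fun i hi => pC_zero hπ hi, ?_, ?_⟩
  · intro i hi
    obtain ⟨B, hB, hiB, b, hb, hbi⟩ := exists_nonmin hπ hc hn hi
    rw [pC_eq_min hπ hB hiB hb hbi]
    exact lt_of_le_of_lt (Finset.min'_le _ _ hb) hbi
  · intro i hi
    obtain ⟨B, hB, hiB, b, hb, hbi⟩ := exists_nonmin hπ hc hn hi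
    have hne : B.Nonempty := ⟨b, hb⟩
    have hpi : pConstr n π i = B.min' hne := pC_eq_min hπ hB hiB hb hbi
    have hmin_lt : B.min' hne < i := lt_of_le_of_lt (Finset.min'_le _ _ hb) hbi
    set j : Fin n := ⟨i.1 - 1, lt_of_le_of_lt (Nat.sub_le _ _) i.2⟩ with hjdef
    have hvj : B.min' hne ≤ j := by
      rw [Fin.le_def]; rw [Fin.lt_def] at hmin_lt; simp only [hjdef]; omega
    have hji : j < i := by rw [Fin.lt_def]; simp only [hjdef]; omega
    obtain ⟨m, hm⟩ := claimE hπ hc hn j.1 j rfl B hB hne i hiB hvj hji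
    exact ⟨m, by rw [hpi, ← hm]⟩

/-- The offsprings under `pConstr` of the minimum of a block are its other elements. -/
lemma offspring_pC {B : Finset (Fin n)} (hB : B ∈ π) (hne : B.Nonempty) :
    offspring (pConstr n π) (B.min' hne) = B.erase (B.min' hne) := by
  ext j
  simp only [offspring, Finset.mem_filter, Finset.mem_univ, true_and, Finset.mem_erase]
  constructor
  · rintro ⟨hpj, hjne⟩
    have hj0 : 0 < j.1 := by
      rcases Nat.eq_zero_or_pos j.1 with h0 | h0
      · exact absurd ((pC_zero hπ h0).symm.trans hpj) hjne
      · exact h0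
    obtain ⟨D, hD, hjD, b, hb, hbj⟩ := exists_nonmin hπ hc hn hj0
    have hDne : D.Nonempty := ⟨b, hb⟩
    have hpj' : pConstr n π j = D.min' hDne := pC_eq_min hπ hD hjD hb hbj
    have hmins : D.min' hDne = B.min' hne := hpj'.symm.trans hpj
    have hDB : D = B := by
      rcases eq_or_ne D B with h | h
      · exact h
      · exfalso
        obtain ⟨-, -, hiff⟩ := (hπ.2.2.2 D hD B hB h).2 (D.min' hDne)
          (Finset.mem_inter.2 ⟨Finset.min'_mem _ _, hmins ▸ Finset.min'_mem _ _⟩)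
        have h1 : ∀ b' ∈ D, D.min' hDne ≤ b' := fun b' hb' => Finset.min'_le _ _ hb'
        have h2 : ∀ b' ∈ B, D.min' hDne ≤ b' := fun b' hb' => hmins ▸ Finset.min'_le _ _ hb'
        exact (hiff.mp h1) h2
    exact ⟨hjne, hDB ▸ hjD⟩
  · rintro ⟨hjne, hjB⟩
    have hlt : B.min' hne < j := lt_of_le_of_ne (Finset.min'_le _ _ hjB) (Ne.symm hjne)
    exact ⟨pC_eq_min hπ hB hjB (Finset.min'_mem _ _) hlt, hjne⟩

/-- When `n ≥ 2`, every block of a connected NCL partition has at least 2 elements. -/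
lemma two_le_card_block (h2 : 2 ≤ n) {B : Finset (Fin n)} (hB : B ∈ π) : 2 ≤ B.card := by
  obtain ⟨x0, hx0⟩ := hπ.1 B hB
  by_contra hcard
  have hcard1 : B.card = 1 := by
    have := Finset.card_pos.2 ⟨x0, hx0⟩
    omega
  obtain ⟨x, rfl⟩ := Finset.card_eq_one.1 hcard1
  -- x is connected to some other element, giving a second block containing x
  have hy : ∃ y : Fin n, y ≠ x := by
    rcases eq_or_ne x ⟨0, by omega⟩ with h | h
    · exact ⟨⟨1, by omega⟩, by rw [h]; intro hcon; have := Fin.mk.injEq .. ▸ hcon; simp at this⟩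
    · exact ⟨⟨0, by omega⟩, Ne.symm h⟩
  obtain ⟨y, hyx⟩ := hy
  have hconn : Connected π x y := by
    have h1 := conn_from_zero hc (by omega) x
    have h2' := conn_from_zero hc (by omega) y
    have hsym : Symmetric (fun a b : Fin n => ∃ B ∈ π, a ∈ B ∧ b ∈ B) := by
      rintro a b ⟨B, hB', ha, hb⟩; exact ⟨B, hB', hb, ha⟩
    exact Relation.ReflTransGen.trans (@Std.Symm.symm _ _ (@Relation.ReflTransGen.stdSymm _ _ ⟨fun a b h => hsym h⟩) _ _ h1) h2'
  -- extract a block containing x and another element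
  have hstep : ∀ z : Fin n, Connected π x z →
      z = x ∨ ∃ C ∈ π, x ∈ C ∧ ∃ c ∈ C, c ≠ x := by
    intro z hz
    induction hz with
    | refl => exact Or.inl rfl
    | @tail b c hab hbc ih =>
      rcases ih with hbx | found
      · obtain ⟨C, hC, hxC, hcC⟩ := hbc
        rw [hbx] at hxC
        rcases eq_or_ne c x with h | h
        · exact Or.inl h
        · exact Or.inr ⟨C, hC, hxC, c, hcC, h⟩
      · exact Or.inr found
  rcases hstep y hconn with h | ⟨C, hC, hxC, c, hcC, hcx⟩
  · exact hyx h
  · have hCne : C ≠ {x} := by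
      intro hcon
      rw [hcon, Finset.mem_singleton] at hcC
      exact hcx hcC
    obtain ⟨-, hcard2, -⟩ := (hπ.2.2.2 C hC {x} hB hCne).2 x
      (Finset.mem_inter.2 ⟨hxC, Finset.mem_singleton_self _⟩)
    simp at hcard2

lemma phi_pC : phiFun n (pConstr n π) = π := by
  have hdfs := pC_dfs hπ hc hn
  ext B
  rw [mem_phiFun]
  constructor
  · rintro ⟨v, hcond, rfl⟩
    rcases hcond with hne | hone
    · -- v has offsprings: v is the min of a block of π
      obtain ⟨j, hj⟩ := hne
      rw [offspring, Finset.mem_filter] at hj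
      obtain ⟨-, hpj, hjv⟩ := hj
      have hj0 : 0 < j.1 := by
        rcases Nat.eq_zero_or_pos j.1 with h0 | h0
        · exact absurd ((pC_zero hπ h0).symm.trans hpj) hjv
        · exact h0
      obtain ⟨D, hD, hjD, b, hb, hbj⟩ := exists_nonmin hπ hc hn hj0
      have hDne : D.Nonempty := ⟨b, hb⟩
      have hveq : v = D.min' hDne := hpj.symm.trans (pC_eq_min hπ hD hjD hb hbj)
      have : insert v (offspring (pConstr n π) v) = D := by
        rw [hveq, offspring_pC hπ hc hn hD hDne,
          Finset.insert_erase (Finset.min'_mem _ _)]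
      rw [this]; exact hD
    · -- n = 1
      subst hone
      obtain ⟨C, hC, h0C⟩ := hπ.2.1 v
      have : C = insert v (offspring (pConstr 1 π) v) := by
        apply Finset.eq_of_subset_of_card_le
        · intro y hy
          have : y = v := Subsingleton.elim y v
          rw [this]; exact Finset.mem_insert_self _ _
        · have h1 : insert v (offspring (pConstr 1 π) v) ⊆ {v} := by
            intro y hy
            have : y = v := Subsingleton.elim y v
            rw [this]; exact Finset.mem_singleton_self _
          calc (insert v (offspring (pConstr 1 π) v)).card ≤ ({v} : Finset (Fin 1)).card :=
                Finset.card_le_card h1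
            _ = 1 := Finset.card_singleton _
            _ ≤ C.card := Finset.card_pos.2 ⟨v, h0C⟩
      rw [← this]; exact hC
  · intro hB
    have hne : B.Nonempty := hπ.1 B hB
    refine ⟨B.min' hne, ?_, ?_⟩
    · rcases eq_or_ne n 1 with h1 | h1
      · exact Or.inr h1
      · left
        rw [offspring_pC hπ hc hn hB hne]
        have h2 : 2 ≤ B.card := two_le_card_block hπ hc hn (by omega) hB
        rw [← Finset.card_pos, Finset.card_erase_of_mem (Finset.min'_mem _ _)]
        omega
    · rw [offspring_pC hπ hc hn hB hne, Finset.insert_erase (Finset.min'_mem _ _)]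

end Partition2

lemma pC_phi {p : Fin n → Fin n} (hp : IsDFSTree p) (hn : 1 ≤ n) :
    pConstr n (phiFun n p) = p := by
  have hmem := phiFun_mem_NCL hp hn
  funext x
  rcases Nat.eq_zero_or_pos x.1 with h0 | h0
  · rw [pC_zero hmem.1 h0, hp.1 x h0]
  · have hplt : p x < x := hp.2.1 x h0
    have hxo : x ∈ offspring p (p x) :=
      Finset.mem_filter.2 ⟨Finset.mem_univ x, rfl, ne_of_gt hplt⟩
    have hB : insert (p x) (offspring p (p x)) ∈ phiFun n p :=
      mem_phiFun.2 ⟨p x, Or.inl ⟨x, hxo⟩, rfl⟩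
    have hxB : x ∈ insert (p x) (offspring p (p x)) := Finset.mem_insert_of_mem hxo
    have heq : pConstr n (phiFun n p) x =
        (insert (p x) (offspring p (p x))).min' ⟨p x, Finset.mem_insert_self _ _⟩ :=
      pC_eq_min hmem.1 hB hxB (Finset.mem_insert_self _ _) hplt
    rw [heq]; exact block_min hp _

end Aux
/-- there is a bijection `Θ` from the connected non-crossing linked
partitions of {1,…,n} onto the planar rooted trees with `n` vertices (labeled in left
depth-first order), under which the blocks of `π` are exactly the elementary subtrees
(a root together with its offsprings) of `Θ(π)`. -/
theorem stmt11 (n : ℕ) (hn : 1 ≤ n) :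
    ∃ Θ : {π : Finset (Finset (Fin n)) // π ∈ NCL n ∧
            cIs π {(Finset.univ : Finset (Fin n))}} ≃ {p : Fin n → Fin n // IsDFSTree p},
      ∀ π, ∀ B : Finset (Fin n), B ∈ π.1 ↔
        ∃ v : Fin n, B = insert v (offspring (Θ π).1 v) ∧
          ((offspring (Θ π).1 v).Nonempty ∨ n = 1) := by
  classical
  set Φ : {p : Fin n → Fin n // IsDFSTree p} →
      {π : Finset (Finset (Fin n)) // π ∈ NCL n ∧
        cIs π {(Finset.univ : Finset (Fin n))}} :=
    fun t => ⟨phiFun n t.1, phiFun_mem_NCL t.2 hn⟩ with hΦdef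
  have hbij : Function.Bijective Φ := by
    constructor
    · intro t t' h
      have h' : phiFun n t.1 = phiFun n t'.1 := congrArg Subtype.val h
      apply Subtype.ext
      rw [← pC_phi t.2 hn, ← pC_phi t'.2 hn, h']
    · rintro ⟨π, hπ, hc⟩
      exact ⟨⟨pConstr n π, pC_dfs hπ hc hn⟩, Subtype.ext (phi_pC hπ hc hn)⟩
  refine ⟨(Equiv.ofBijective Φ hbij).symm, ?_⟩
  intro π B
  have key : phiFun n (((Equiv.ofBijective Φ hbij).symm π).1) = π.1 := by
    have h1 := (Equiv.ofBijective Φ hbij).apply_symm_apply π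
    have h2 : Φ ((Equiv.ofBijective Φ hbij).symm π) = π := h1
    exact congrArg Subtype.val h2
  rw [show (π.1 : Finset (Finset (Fin n))) = _ from key.symm, mem_phiFun]
  constructor
  · rintro ⟨v, h1, h2⟩; exact ⟨v, h2, h1⟩
  · rintro ⟨v, h1, h2⟩; exact ⟨v, h2, h1⟩
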